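/- Let η > 0 and ς > 0, let N ≥ 0 be an integer and let g_0, …, g_N be nonnegative real numbers. Define Γ_0 = 0 and Γ_{τ+1} = Γ_τ + g_τ² for 0 ≤ τ ≤ N, and set α_τ = η/√(Γ_{τ+1} + ς). If Γ_{N+1} ≥ ς, then Σ_{τ=0}^{N} α_τ · g_τ² ≥ (η/(2√2)) · √(Γ_{N+1}). -/

import Mathlib

/-- AdaGrad-norm lower bound on the accumulated first-order decrease:
with `Γ 0 = 0`, `Γ (τ+1) = Γ τ + (g τ)^2` and step sizes
`α τ = η / √(Γ (τ+1) + ς)`, if `Γ (N+1) ≥ ς` then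
`∑_{τ=0}^{N} α τ * (g τ)^2 ≥ (η/(2√2)) * √(Γ (N+1))`. -/
theorem adagrad_sum_lower_bound
    (η ς : ℝ) (hη : 0 < η) (hς : 0 < ς)
    (N : ℕ) (g Γ : ℕ → ℝ)
    (hg : ∀ τ ≤ N, 0 ≤ g τ)
    (hΓ0 : Γ 0 = 0)
    (hΓ : ∀ τ ≤ N, Γ (τ + 1) = Γ τ + g τ ^ 2)
    (hbig : ς ≤ Γ (N + 1)) :
    (η / (2 * Real.sqrt 2)) * Real.sqrt (Γ (N + 1)) ≤
      ∑ τ ∈ Finset.range (N + 1), (η / Real.sqrt (Γ (τ + 1) + ς)) * g τ ^ 2 := by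
  set G := Γ (N + 1) with hG
  have hGpos : 0 < G := lt_of_lt_of_le hς hbig
  -- monotonicity: Γ (τ+1) ≤ G for τ ≤ N
  have hmono : ∀ τ ≤ N, Γ (τ + 1) ≤ G := by
    intro τ hτ
    have key : ∀ k, τ + 1 + k ≤ N + 1 → Γ (τ + 1) ≤ Γ (τ + 1 + k) := by
      intro k
      induction k with
      | zero => intro _; simp
      | succ n ih =>
        intro h
        have h1 : τ + 1 + n ≤ N := by omega
        have := hΓ (τ + 1 + n) h1
        have h2 : Γ (τ + 1 + n) ≤ Γ (τ + 1 + n + 1) := by nlinarith [sq_nonneg (g (τ + 1 + n))]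
        have := ih (by omega)
        calc Γ (τ + 1) ≤ Γ (τ + 1 + n) := this
          _ ≤ Γ (τ + 1 + n + 1) := h2
      
    have := key (N - τ) (by omega)
    have heq : τ + 1 + (N - τ) = N + 1 := by omega
    rwa [heq] at this
  -- telescoping sum
  have hsum : ∑ τ ∈ Finset.range (N + 1), g τ ^ 2 = G := by
    have : ∀ n ≤ N + 1, ∑ τ ∈ Finset.range n, g τ ^ 2 = Γ n := by
      intro n
      induction n with
      | zero => intro _; simp [hΓ0]
      | succ m ih =>
        intro h
        rw [Finset.sum_range_succ, ih (by omega), hΓ m (by omega)]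
    exact this (N + 1) le_rfl
  -- lower bound each term
  have hterm : ∀ τ ∈ Finset.range (N + 1),
      (η / Real.sqrt (2 * G)) * g τ ^ 2 ≤ (η / Real.sqrt (Γ (τ + 1) + ς)) * g τ ^ 2 := by
    intro τ hτ
    have hτN : τ ≤ N := by simpa using Nat.lt_succ_iff.mp (Finset.mem_range.mp hτ)
    have h1 : Γ (τ + 1) + ς ≤ 2 * G := by
      have := hmono τ hτN; linarith
    have hpos : 0 < Γ (τ + 1) + ς := by
      have : 0 ≤ Γ (τ + 1) := by
        have h0 : Γ 1 = g 0 ^ 2 := by rw [hΓ 0 (by omega), hΓ0]; ring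
        have key : ∀ k ≤ N, 0 ≤ Γ (k + 1) := by
          intro k
          induction k with
          | zero => intro _; rw [h0]; positivity
          | succ m ih =>
            intro h
            rw [hΓ (m + 1) h]
            have := ih (by omega)
            nlinarith [sq_nonneg (g (m + 1))]
        exact key τ hτN
      linarith
    have hsq : Real.sqrt (Γ (τ + 1) + ς) ≤ Real.sqrt (2 * G) := Real.sqrt_le_sqrt h1
    have hsqpos : 0 < Real.sqrt (Γ (τ + 1) + ς) := Real.sqrt_pos.mpr hpos
    have : η / Real.sqrt (2 * G) ≤ η / Real.sqrt (Γ (τ + 1) + ς) :=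
      div_le_div_of_nonneg_left hη.le hsqpos hsq
    exact mul_le_mul_of_nonneg_right this (sq_nonneg _)
  have hmain : (η / Real.sqrt (2 * G)) * G ≤
      ∑ τ ∈ Finset.range (N + 1), (η / Real.sqrt (Γ (τ + 1) + ς)) * g τ ^ 2 := by
    calc (η / Real.sqrt (2 * G)) * G
        = ∑ τ ∈ Finset.range (N + 1), (η / Real.sqrt (2 * G)) * g τ ^ 2 := by
          rw [← Finset.mul_sum, hsum]
      _ ≤ _ := Finset.sum_le_sum hterm
  refine le_trans ?_ hmain
  -- (η/(2√2)) * √G ≤ (η/√(2G)) * G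
  have h2G : Real.sqrt (2 * G) = Real.sqrt 2 * Real.sqrt G := Real.sqrt_mul (by norm_num) G
  have hsG : Real.sqrt G > 0 := Real.sqrt_pos.mpr hGpos
  have hGeq : G = Real.sqrt G * Real.sqrt G := (Real.mul_self_sqrt hGpos.le).symm
  rw [h2G]
  have h2 : (0:ℝ) < Real.sqrt 2 := by positivity
  rw [div_mul_eq_mul_div, div_mul_eq_mul_div, div_le_div_iff₀ (by positivity) (by positivity)]
  have hm : Real.sqrt G * Real.sqrt G = G := Real.mul_self_sqrt hGpos.le
  nlinarith [mul_pos (mul_pos hη hGpos) h2, hm]
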